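/- arXiv:1801.10429 — 2 statements merged into one kernel-verified Lean document; each statement's English description precedes it below -/
import Mathlib

section
/- Let L(x) = sqrt(1 - ||x||^2) on the open unit ball B^d, and let g_H be the hyperbolic (Klein model) metric defined by g_H(x)(X,Y) = L(x)^{-2}⟨X,Y⟩ + L(x)^{-4}⟨x,X⟩⟨x,Y⟩. Then the Euclidean Hessian of L satisfies Hess L(x)(X,Y) = -L(x) · g_H(x)(X,Y) for all x in B^d and X, Y in R^d. -/
/-- With `L y = √(1 - ‖y‖²)` on the open unit ball and the Klein hyperbolic
metric `g_H(x)(X,Y) = L⁻²⟪X,Y⟫ + L⁻⁴⟪x,X⟫⟪x,Y⟫`, the Euclidean Hessian of `L` satisfies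
`Hess L(x)(X,Y) = -L(x) · g_H(x)(X,Y)`. -/
theorem hessian_L_eq_neg_L_mul_hyperbolic_metric (d : ℕ)
    (L : EuclideanSpace ℝ (Fin d) → ℝ)
    (hL : ∀ y, L y = Real.sqrt (1 - ‖y‖ ^ 2))
    (x X Y : EuclideanSpace ℝ (Fin d)) (hx : ‖x‖ < 1) :
    fderiv ℝ (fun y => fderiv ℝ L y X) x Y =
      -(L x) * ((L x)⁻¹ ^ 2 * (inner ℝ X Y : ℝ)
        + (L x)⁻¹ ^ 4 * (inner ℝ x X : ℝ) * (inner ℝ x Y : ℝ)) := by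
  have hLfun : L = fun y => Real.sqrt (1 - ‖y‖ ^ 2) := funext hL
  subst hLfun
  have hball : ∀ y : EuclideanSpace ℝ (Fin d), ‖y‖ < 1 → (0:ℝ) < 1 - ‖y‖ ^ 2 := by
    intro y hy; nlinarith [norm_nonneg y]
  -- derivative of the defining function at any point of the ball
  have key : ∀ y : EuclideanSpace ℝ (Fin d), ‖y‖ < 1 →
      HasFDerivAt (fun z : EuclideanSpace ℝ (Fin d) => Real.sqrt (1 - ‖z‖ ^ 2))
        ((-(Real.sqrt (1 - ‖y‖ ^ 2))⁻¹) • (innerSL ℝ y)) y := by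
    intro y hy
    have h2 : (0:ℝ) < 1 - ‖y‖ ^ 2 := hball y hy
    have h1 : HasFDerivAt (fun z : EuclideanSpace ℝ (Fin d) => 1 - ‖z‖ ^ 2)
        ((-2 : ℝ) • (innerSL ℝ y)) y := by
      have h := (hasFDerivAt_const (1:ℝ) y).sub (hasFDerivAt_id y).norm_sq
      refine h.congr_fderiv ?_
      ext z
      simp [two_smul]
    have h3 := h1.sqrt h2.ne'
    refine h3.congr_fderiv ?_
    rw [smul_smul]
    congr 1
    have hs : Real.sqrt (1 - ‖y‖ ^ 2) ≠ 0 := (Real.sqrt_pos.mpr h2).ne'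
    field_simp
  have hx2 : (0:ℝ) < 1 - ‖x‖ ^ 2 := hball x hx
  have hspos : 0 < Real.sqrt (1 - ‖x‖ ^ 2) := Real.sqrt_pos.mpr hx2
  set s := Real.sqrt (1 - ‖x‖ ^ 2) with hsdef
  -- on a neighborhood, the first derivative in direction X is given by a formula
  have hev : (fun y => fderiv ℝ (fun z : EuclideanSpace ℝ (Fin d) =>
        Real.sqrt (1 - ‖z‖ ^ 2)) y X)
      =ᶠ[nhds x] fun y => -(Real.sqrt (1 - ‖y‖ ^ 2))⁻¹ * (inner ℝ y X : ℝ) := by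
    have hopen : IsOpen {y : EuclideanSpace ℝ (Fin d) | ‖y‖ < 1} :=
      isOpen_lt continuous_norm continuous_const
    filter_upwards [hopen.mem_nhds hx] with y hy
    rw [(key y hy).fderiv]
    simp
  rw [hev.fderiv_eq]
  -- compute the derivative of the product
  have ha : HasFDerivAt (fun y : EuclideanSpace ℝ (Fin d) =>
      -(Real.sqrt (1 - ‖y‖ ^ 2))⁻¹) ((-(s⁻¹ ^ 3)) • (innerSL ℝ x)) x := by
    have h := ((hasDerivAt_inv hspos.ne').comp_hasFDerivAt x (key x hx)).neg
    refine h.congr_fderiv ?_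
    rw [← neg_smul, smul_smul]
    congr 1
    field_simp
    ring
  have hb : HasFDerivAt (fun y : EuclideanSpace ℝ (Fin d) => (inner ℝ y X : ℝ))
      (innerSL ℝ X) x := by
    have h := (innerSL ℝ X).hasFDerivAt (x := x)
    convert h using 1
    funext y
    exact (real_inner_comm y X).symm
  have hprod := ha.mul hb
  rw [HasFDerivAt.fderiv (f := fun y => -(Real.sqrt (1 - ‖y‖ ^ 2))⁻¹ * (inner ℝ y X : ℝ)) hprod]
  have hax : -(Real.sqrt (1 - ‖x‖ ^ 2))⁻¹ = -s⁻¹ := by rw [hsdef]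
  simp only [ContinuousLinearMap.add_apply, ContinuousLinearMap.smul_apply, innerSL_apply_apply,
    smul_eq_mul]
  have hs0 : s ≠ 0 := hspos.ne'
  rw [← hsdef]
  field_simp
  ring
end

section
/- Let x, v ∈ R^{d,1} with ⟨x,x⟩_{d,1} = -1, ⟨v,v⟩_{d,1} = 1, ⟨x,v⟩_{d,1} = 0, and x_{d+1} > 0. Let w be a future lightlike vector (⟨w,w⟩_{d,1} = 0) satisfying ⟨x,w⟩_{d,1} = -1. Then -1 ≤ ⟨w,v⟩_{d,1} ≤ 1; moreover ⟨w,v⟩_{d,1} = 1 if and only if w = x + v, and ⟨w,v⟩_{d,1} = -1 if and only if w = x - v. -/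
/-- The Minkowski bilinear form of signature `(d,1)` on `ℝ^{d+1}`. -/
def mink (d : ℕ) (x y : Fin (d + 1) → ℝ) : ℝ :=
  (∑ i : Fin d, x i.castSucc * y i.castSucc) - x (Fin.last d) * y (Fin.last d)

lemma mink_comm (d : ℕ) (a b : Fin (d + 1) → ℝ) : mink d a b = mink d b a := by
  simp [mink, mul_comm]

lemma mink_add_left (d : ℕ) (a b c : Fin (d + 1) → ℝ) :
    mink d (a + b) c = mink d a c + mink d b c := by
  simp [mink, add_mul, Finset.sum_add_distrib]; ring

lemma mink_sub_left (d : ℕ) (a b c : Fin (d + 1) → ℝ) :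
    mink d (a - b) c = mink d a c - mink d b c := by
  simp [mink, sub_mul, Finset.sum_sub_distrib]; ring

lemma mink_smul_left (d : ℕ) (t : ℝ) (a b : Fin (d + 1) → ℝ) :
    mink d (t • a) b = t * mink d a b := by
  simp [mink, Finset.mul_sum, mul_assoc, mul_sub]

/-- On the orthogonal complement of a unit timelike vector, the form is positive definite. -/
lemma mink_ortho_posdef (d : ℕ) (x u : Fin (d + 1) → ℝ)
    (hx : mink d x x = -1) (h : mink d x u = 0) :
    0 ≤ mink d u u ∧ (mink d u u = 0 → u = 0) := by
  set A := ∑ i : Fin d, x i.castSucc * x i.castSucc with hA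
  set B := ∑ i : Fin d, u i.castSucc * u i.castSucc with hB
  set S := ∑ i : Fin d, x i.castSucc * u i.castSucc with hS
  set s := x (Fin.last d)
  set t := u (Fin.last d)
  have hA0 : 0 ≤ A := Finset.sum_nonneg fun i _ => mul_self_nonneg _
  have hB0 : 0 ≤ B := Finset.sum_nonneg fun i _ => mul_self_nonneg _
  have hxA : A - s * s = -1 := hx
  have hSu : S - s * t = 0 := h
  have hCS : S ^ 2 ≤ A * B := by
    have := Finset.sum_mul_sq_le_sq_mul_sq Finset.univ
      (fun i : Fin d => x i.castSucc) (fun i : Fin d => u i.castSucc)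
    simpa [hA, hB, hS, sq] using this
  have hs1 : 1 ≤ s * s := by linarith
  have hSst : S = s * t := by linarith
  have h2 : s * s * (t * t) ≤ (s * s - 1) * B := by
    have := hCS; rw [hSst] at this; nlinarith [this]
  have key : 0 ≤ B - t * t := by nlinarith [h2, hB0, hs1]
  have huu : mink d u u = B - t * t := rfl
  refine ⟨by rw [huu]; exact key, fun h0 => ?_⟩
  rw [huu] at h0
  have hBz : B = 0 := by nlinarith [h2, hB0, hs1]
  have htz : t = 0 := mul_self_eq_zero.mp (by linarith)
  have hcomp : ∀ i : Fin d, u i.castSucc = 0 := by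
    intro i
    have := (Finset.sum_eq_zero_iff_of_nonneg
      (fun j _ => mul_self_nonneg (u (Fin.castSucc j)))).mp hBz i (Finset.mem_univ i)
    exact mul_self_eq_zero.mp this
  funext j
  refine Fin.lastCases ?_ ?_ j
  · exact htz
  · exact hcomp

/-- For a future unit timelike `x`, a unit spacelike `v` orthogonal to `x`,
and a lightlike `w` with `⟨x,w⟩ = -1`, one has `-1 ≤ ⟨w,v⟩ ≤ 1`, with
`⟨w,v⟩ = 1 ↔ w = x + v` and `⟨w,v⟩ = -1 ↔ w = x - v`. -/
theorem lightlike_pairing_bounds (d : ℕ) (x v w : Fin (d + 1) → ℝ)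
    (hx : mink d x x = -1) (hv : mink d v v = 1) (hxv : mink d x v = 0)
    (hfut : 0 < x (Fin.last d))
    (hw : mink d w w = 0) (hxw : mink d x w = -1) :
    (-1 ≤ mink d w v ∧ mink d w v ≤ 1) ∧
      (mink d w v = 1 ↔ w = x + v) ∧
      (mink d w v = -1 ↔ w = x - v) := by
  set t := mink d w v with ht
  set u : Fin (d + 1) → ℝ := w - x - t • v with hu
  have hwx : mink d w x = -1 := by rw [mink_comm]; exact hxw
  have hvx : mink d v x = 0 := by rw [mink_comm]; exact hxv
  have hvw : mink d v w = t := by rw [mink_comm]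
  have hxu : mink d x u = 0 := by
    rw [mink_comm, hu, mink_sub_left, mink_sub_left, mink_smul_left, hwx, hx, hvx]
    ring
  have huw : mink d u w = 1 - t * t := by
    rw [hu, mink_sub_left, mink_sub_left, mink_smul_left, hw, hxw, hvw]; ring
  have huv : mink d u v = 0 := by
    rw [hu, mink_sub_left, mink_sub_left, mink_smul_left, ← ht, hxv, hv]; ring
  have huu : mink d u u = 1 - t * t := by
    rw [mink_comm, hu, mink_sub_left, mink_sub_left, mink_smul_left,
      mink_comm _ w u, huw, hxu, mink_comm _ v u, huv]
    ring
  obtain ⟨hpos, hdef⟩ := mink_ortho_posdef d x u hx hxu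
  rw [huu] at hpos hdef
  have hwrec : t = 1 → w = x + v := by
    intro h1
    have hz : u = 0 := hdef (by rw [h1]; ring)
    rw [hu] at hz
    have h2 : w - x = t • v := sub_eq_zero.mp (sub_eq_zero.mp hz ▸ hz)
    have h3 : w = x + t • v := by rw [← h2]; abel
    rw [h3, h1, one_smul]
  have hwrec' : t = -1 → w = x - v := by
    intro h1
    have hz : u = 0 := hdef (by rw [h1]; ring)
    rw [hu] at hz
    have h2 : w - x = t • v := sub_eq_zero.mp (sub_eq_zero.mp hz ▸ hz)
    have h3 : w = x + t • v := by rw [← h2]; abel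
    rw [h3, h1]
    funext i; simp [sub_eq_add_neg]
  refine ⟨⟨by nlinarith, by nlinarith⟩, ⟨hwrec, ?_⟩, ⟨hwrec', ?_⟩⟩
  · rintro rfl
    rw [ht, mink_add_left, hxv, hv]; ring
  · rintro rfl
    rw [ht, mink_sub_left, hxv, hv]; ring
end
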